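/- arXiv:0711.0358 — 4 statements merged into one kernel-verified Lean document; each statement's English description precedes it below -/
import Mathlib

section
/- Let x, y be positive integers with x > y, and let l be a natural number. Define S_p = {(m₁,m₂) ∈ ℕ₊² : l = m₁x + m₂y}, S_q = {(n₁,n₂) ∈ ℕ² : l = x + n₁x + n₂(x−y)}, S_r = {(m,n) ∈ ℕ₊ × ℕ : l = y + m(x−y) + ny}. Then the map sending (m,n) ∈ S_r to (m, 1−m+n) ∈ S_p if 1−m+n > 0, and to (n, −1+m−n) ∈ S_q if 1−m+n ≤ 0, is a bijection from S_r onto the disjoint union S_p ⊔ S_q. -/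
/-- The explicit map `(m,n) ↦ (m, 1−m+n)` or `(n, −1+m−n)` is a bijection from
`S_r` onto the disjoint union `S_p ⊔ S_q`. -/
theorem stmt_4 (x y : ℤ) (hy : 0 < y) (hxy : y < x) (l : ℕ)
    (Sp : Set (ℤ × ℤ)) (hSp : Sp = {m : ℤ × ℤ | 0 < m.1 ∧ 0 < m.2 ∧ (l : ℤ) = m.1 * x + m.2 * y})
    (Sq : Set (ℤ × ℤ)) (hSq : Sq = {n : ℤ × ℤ | 0 ≤ n.1 ∧ 0 ≤ n.2 ∧ (l : ℤ) = x + n.1 * x + n.2 * (x - y)})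
    (Sr : Set (ℤ × ℤ)) (hSr : Sr = {p : ℤ × ℤ | 0 < p.1 ∧ 0 ≤ p.2 ∧ (l : ℤ) = y + p.1 * (x - y) + p.2 * y})
    (f : ℤ × ℤ → (ℤ × ℤ) ⊕ (ℤ × ℤ))
    (hf : f = fun p => if 0 < 1 - p.1 + p.2 then Sum.inl (p.1, 1 - p.1 + p.2)
      else Sum.inr (p.2, -1 + p.1 - p.2)) :
    Set.BijOn f Sr (Sum.inl '' Sp ∪ Sum.inr '' Sq) := by
  subst hSp hSq hSr hf
  refine ⟨?_, ?_, ?_⟩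
  · rintro ⟨m, n⟩ ⟨hm, hn, hl⟩
    dsimp only
    split_ifs with h
    · exact Or.inl ⟨(m, 1 - m + n), ⟨hm, h, by linear_combination hl⟩, rfl⟩
    · exact Or.inr ⟨(n, -1 + m - n), ⟨hn, by dsimp only; push_neg at h; linarith,
        by linear_combination hl⟩, rfl⟩
  · rintro ⟨m, n⟩ _ ⟨m', n'⟩ _ heq
    dsimp only at heq
    split_ifs at heq with h1 h2 h2 <;> simp_all <;> omega
  · rintro z (⟨⟨a, b⟩, ⟨ha, hb, hl⟩, rfl⟩ | ⟨⟨a, b⟩, ⟨ha, hb, hl⟩, rfl⟩)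
    · refine ⟨(a, a + b - 1), ⟨ha, by dsimp only at *; linarith, by linear_combination hl⟩, ?_⟩
      dsimp only at *
      rw [if_pos (by linarith)]
      simp only [Prod.mk.injEq, Sum.inl.injEq]
      exact ⟨trivial, by ring⟩
    · refine ⟨(1 + a + b, a), ⟨by dsimp only at *; linarith, ha, by linear_combination hl⟩, ?_⟩
      dsimp only at *
      rw [if_neg (by push_neg; linarith)]
      simp only [Prod.mk.injEq, Sum.inr.injEq]
      exact ⟨trivial, by ring⟩
end

section
/- Let x, y be positive integers with x > y. For every natural number l, the number of pairs (m,n) with m ≥ 1, n ≥ 0 and l = y + m(x−y) + ny equals the number of pairs (m₁,m₂) with m₁,m₂ ≥ 1 and l = m₁x + m₂y plus the number of pairs (n₁,n₂) with n₁,n₂ ≥ 0 and l = x + n₁x + n₂(x−y). -/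
/-- Counting identity `N_r(l) = N_p(l) + N_q(l)` for the `S¹`-action on `ℂP²`. -/
theorem stmt_5 (x y : ℤ) (hy : 0 < y) (hxy : y < x) (l : ℕ) :
    Nat.card {p : ℤ × ℤ // 1 ≤ p.1 ∧ 0 ≤ p.2 ∧ (l : ℤ) = y + p.1 * (x - y) + p.2 * y} =
      Nat.card {m : ℤ × ℤ // 1 ≤ m.1 ∧ 1 ≤ m.2 ∧ (l : ℤ) = m.1 * x + m.2 * y} +
      Nat.card {n : ℤ × ℤ // 0 ≤ n.1 ∧ 0 ≤ n.2 ∧ (l : ℤ) = x + n.1 * x + n.2 * (x - y)} := by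
  -- finiteness helper
  have hfin : ∀ (P : ℤ × ℤ → Prop),
      (∀ p, P p → p ∈ Set.Icc ((0 : ℤ), (0 : ℤ)) ((l : ℤ), (l : ℤ))) →
      Finite {p : ℤ × ℤ // P p} := by
    intro P h
    exact Set.Finite.to_subtype (Set.Finite.subset (Set.finite_Icc _ _) h)
  have h1 : Finite {m : ℤ × ℤ // 1 ≤ m.1 ∧ 1 ≤ m.2 ∧ (l : ℤ) = m.1 * x + m.2 * y} := by
    apply hfin
    rintro ⟨a, b⟩ ⟨ha, hb, he⟩
    simp only [Set.mem_Icc, Prod.mk_le_mk]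
    refine ⟨⟨by linarith, by linarith⟩, ?_, ?_⟩ <;> nlinarith [mul_le_mul_of_nonneg_left hxy.le (by linarith : (0:ℤ) ≤ a), mul_le_mul_of_nonneg_left hy.le (by linarith : (0:ℤ) ≤ b), mul_le_mul_of_nonneg_right (by linarith : (1:ℤ) ≤ x) (by linarith : (0:ℤ) ≤ a), mul_le_mul_of_nonneg_right (by linarith : (1:ℤ) ≤ y) (by linarith : (0:ℤ) ≤ b)]
  have h2 : Finite {n : ℤ × ℤ // 0 ≤ n.1 ∧ 0 ≤ n.2 ∧ (l : ℤ) = x + n.1 * x + n.2 * (x - y)} := by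
    apply hfin
    rintro ⟨a, b⟩ ⟨ha, hb, he⟩
    simp only [Set.mem_Icc, Prod.mk_le_mk]
    refine ⟨⟨ha, hb⟩, ?_, ?_⟩ <;> nlinarith [mul_le_mul_of_nonneg_right (by linarith : (1:ℤ) ≤ x) ha, mul_le_mul_of_nonneg_right (by linarith : (1:ℤ) ≤ x - y) hb]
  -- the bijection
  set L := {p : ℤ × ℤ // 1 ≤ p.1 ∧ 0 ≤ p.2 ∧ (l : ℤ) = y + p.1 * (x - y) + p.2 * y} with hL
  set R1 := {m : ℤ × ℤ // 1 ≤ m.1 ∧ 1 ≤ m.2 ∧ (l : ℤ) = m.1 * x + m.2 * y} with hR1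
  set R2 := {n : ℤ × ℤ // 0 ≤ n.1 ∧ 0 ≤ n.2 ∧ (l : ℤ) = x + n.1 * x + n.2 * (x - y)} with hR2
  let f : R1 ⊕ R2 → L := Sum.elim
    (fun m => ⟨(m.1.1, m.1.2 + m.1.1 - 1), m.2.1,
      by have := m.2.1; have := m.2.2.1; omega, by linear_combination m.2.2.2⟩)
    (fun n => ⟨(n.1.1 + n.1.2 + 1, n.1.1),
      by have := n.2.1; have := n.2.2.1; omega, n.2.1, by linear_combination n.2.2.2⟩)
  have hbij : Function.Bijective f := by
    constructor
    · rintro (⟨⟨a, b⟩, ha, hb, he⟩ | ⟨⟨a, b⟩, ha, hb, he⟩)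
        (⟨⟨c, d⟩, hc, hd, hf'⟩ | ⟨⟨c, d⟩, hc, hd, hf'⟩) h
      · have e1 : a = c := congrArg (fun s => s.val.1) h
        have e2 : b + a - 1 = d + c - 1 := congrArg (fun s => s.val.2) h
        exact congrArg Sum.inl (Subtype.ext (Prod.ext (show a = c by omega) (show b = d by omega)))
      · have e1 : a = c + d + 1 := congrArg (fun s => s.val.1) h
        have e2 : b + a - 1 = c := congrArg (fun s => s.val.2) h
        exact absurd hb (by omega)
      · have e1 : a + b + 1 = c := congrArg (fun s => s.val.1) h
        have e2 : a = d + c - 1 := congrArg (fun s => s.val.2) h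
        exact absurd hd (by omega)
      · have e1 : a + b + 1 = c + d + 1 := congrArg (fun s => s.val.1) h
        have e2 : a = c := congrArg (fun s => s.val.2) h
        exact congrArg Sum.inr (Subtype.ext (Prod.ext (show a = c by omega) (show b = d by omega)))
    · rintro ⟨⟨a, b⟩, ha, hb, he⟩
      by_cases hab : a ≤ b
      · refine ⟨Sum.inl ⟨(a, b - a + 1), ha, by omega, by linear_combination he⟩, ?_⟩
        exact Subtype.ext (show ((a : ℤ), b - a + 1 + a - 1) = (a, b) by
          rw [show b - a + 1 + a - 1 = b by ring])
      · refine ⟨Sum.inr ⟨(b, a - b - 1), hb, by omega, by linear_combination he⟩, ?_⟩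
        exact Subtype.ext (show ((b : ℤ) + (a - b - 1) + 1, b) = (a, b) by
          rw [show (b : ℤ) + (a - b - 1) + 1 = a by ring])
  calc Nat.card L = Nat.card (R1 ⊕ R2) := (Nat.card_eq_of_bijective f hbij).symm
    _ = Nat.card R1 + Nat.card R2 := Nat.card_sum
end

section
/- Let I ⊆ ℤ be a subgroup (ideal), Q a finite nonempty set, J: {p} ∪ Q → ℤ, and α a nonzero integer. Suppose for every sufficiently large natural number m there exists q ∈ Q with J(p) − J(q) + m·α ∈ I. Then there exists a natural number c with 1 ≤ c ≤ #Q such that c·α ∈ I, and there exists q ∈ Q with J(p) − J(q) ∈ I. -/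
/-- Pigeonhole argument underlying Proposition 3.2 of the paper. -/
theorem stmt_8 {ι : Type*} (I : AddSubgroup ℤ) (Q : Finset ι) (hQ : Q.Nonempty)
    (J : ι → ℤ) (Jp : ℤ) (α : ℤ) (hα : α ≠ 0)
    (h : ∃ M : ℕ, ∀ m : ℕ, M ≤ m → ∃ q ∈ Q, Jp - J q + (m : ℤ) * α ∈ I) :
    (∃ c : ℕ, 1 ≤ c ∧ c ≤ Q.card ∧ (c : ℤ) * α ∈ I) ∧
      ∃ q ∈ Q, Jp - J q ∈ I := by
  obtain ⟨M, hM⟩ := h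
  have h' : ∀ t : ℕ, ∃ q ∈ Q, Jp - J q + ((M + t : ℕ) : ℤ) * α ∈ I :=
    fun t => hM (M + t) (by omega)
  choose g hgQ hgI using h'
  -- pigeonhole on t ∈ range (Q.card + 1)
  obtain ⟨i, hi, j, hj, hij, hgij⟩ :=
    Finset.exists_ne_map_eq_of_card_lt_of_maps_to
      (s := Finset.range (Q.card + 1)) (t := Q)
      (by simp) (fun t _ => hgQ t)
  wlog hlt : i < j generalizing i j
  · exact this j hj i hi hij.symm hgij.symm (by omega)
  have hsub : ((j - i : ℕ) : ℤ) * α ∈ I := by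
    have := I.sub_mem (hgI j) (hgI i)
    rw [hgij] at this
    have heq : (Jp - J (g j) + ((M + j : ℕ) : ℤ) * α) -
        (Jp - J (g j) + ((M + i : ℕ) : ℤ) * α) = ((j - i : ℕ) : ℤ) * α := by
      push_cast [Nat.cast_sub hlt.le]
      ring
    rwa [heq] at this
  set c := j - i with hc
  have hc1 : 1 ≤ c := by omega
  have hcQ : c ≤ Q.card := by
    simp only [Finset.mem_range] at hi hj
    omega
  refine ⟨⟨c, hc1, hcQ, hsub⟩, ?_⟩
  -- take m = c * (M + 1) ≥ M, a multiple of c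
  have hm : M ≤ c * (M + 1) := by nlinarith
  set t := c * (M + 1) - M with ht
  refine ⟨g t, hgQ t, ?_⟩
  have hmul : ((M + t : ℕ) : ℤ) * α ∈ I := by
    have : ((M + t : ℕ) : ℤ) * α = (M + 1) • (((c : ℕ) : ℤ) * α) := by
      have : M + t = c * (M + 1) := by omega
      rw [this]; push_cast; ring
    rw [this]
    exact I.nsmul_mem hsub (M + 1)
  have := I.sub_mem (hgI t) hmul
  simpa using this
end

section
/- Let α₁, α₂, β be positive integers and J_q, J_F integers, and let A₀, A₁ be integers. Suppose that for all λ with 0 < |λ| < 1, ∑_{m₁,m₂≥1} λ^{m₁α₁+m₂α₂+J_q} + A₀ ∑_{l≥0} λ^{J_F+lβ} + A₁ ∑_{l₁,l₂≥0} λ^{J_F+(l₁+l₂+1)β} equals a Laurent polynomial in λ. Then for all sufficiently large natural numbers n₀, the count #{(m₁,m₂) : m₁,m₂ ≥ 1, m₁α₁ + m₂α₂ = J_F − J_q + n₀β} equals −A₀ − n₀A₁. -/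
open Filter Topology FormalMultilinearSeries

lemma coeff_eq_zero_aux (c : ℕ → ℂ)
    (h : ∀ lam : ℂ, 0 < ‖lam‖ → ‖lam‖ < 1 → HasSum (fun k => c k * lam ^ k) 0) :
    ∀ k, c k = 0 := by
  set p := ofScalars ℂ c with hp
  have hhalf : HasSum (fun k => c k * (1/2 : ℂ) ^ k) 0 := by
    refine h _ ?_ ?_ <;> norm_num
  have hrad : ((1/2 : NNReal) : ENNReal) ≤ p.radius := by
    apply p.le_radius_of_tendsto (l := 0)
    have hsn : Summable (fun k => ‖c k * (1/2 : ℂ) ^ k‖) :=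
      (summable_norm_iff).2 hhalf.summable
    have := hsn.tendsto_atTop_zero
    refine this.congr fun n => ?_
    rw [hp, ofScalars_norm, norm_mul, norm_pow]
    norm_num
  have hradpos : 0 < p.radius := lt_of_lt_of_le (by norm_num) hrad
  have hball := p.hasFPowerSeriesOnBall hradpos
  have hat : HasFPowerSeriesAt p.sum p 0 := hball.hasFPowerSeriesAt
  have hsum_eq : ∀ lam : ℂ, 0 < ‖lam‖ → ‖lam‖ < 1 → p.sum lam = 0 := by
    intro lam h1 h2
    have : p.sum lam = ∑' n, c n * lam ^ n := by
      refine tsum_congr fun n => ?_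
      rw [hp, ofScalars_apply_eq, smul_eq_mul]
    rw [this, (h lam h1 h2).tsum_eq]
  have h0 : p.sum 0 = 0 := by
    have hc : ContinuousAt p.sum 0 := hat.continuousAt
    have h1 : Tendsto p.sum (𝓝[≠] (0:ℂ)) (𝓝 (p.sum 0)) :=
      hc.continuousWithinAt.tendsto
    have hev : ∀ᶠ lam in 𝓝[≠] (0:ℂ), p.sum lam = 0 := by
      filter_upwards [self_mem_nhdsWithin,
        nhdsWithin_le_nhds (Metric.ball_mem_nhds (0:ℂ) one_pos)] with lam hne hb
      have h2 : ‖lam‖ < 1 := by simpa [Complex.dist_eq] using hb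
      exact hsum_eq lam (by simpa [norm_pos_iff] using hne) h2
    have h2 : Tendsto p.sum (𝓝[≠] (0:ℂ)) (𝓝 0) :=
      Tendsto.congr' (by filter_upwards [hev] with x hx using hx.symm) tendsto_const_nhds
    exact tendsto_nhds_unique h1 h2
  have hev0 : p.sum =ᶠ[𝓝 (0:ℂ)] 0 := by
    filter_upwards [Metric.ball_mem_nhds (0:ℂ) one_pos] with lam hb
    rcases eq_or_ne lam 0 with rfl | hne
    · exact h0
    · exact hsum_eq lam (by simpa [norm_pos_iff] using hne)
        (by simpa [Complex.dist_eq] using hb)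
  have hz : p = 0 := hat.eq_zero_of_eventually hev0
  intro k
  exact (ofScalars_eq_zero ℂ k).mp (by rw [← hp, hz]; rfl)

lemma hasSum_card_fiber {ι : Type*} (g : ι → ℕ)
    (φ : ℕ → ℂ) {a : ℂ} (hs : HasSum (fun i => φ (g i)) a) :
    HasSum (fun k => (Nat.card (g ⁻¹' {k}) : ℂ) * φ k) a := by
  have H := hs.tsum_fiberwise g
  have he : ∀ k : ℕ, (∑' b : g ⁻¹' {k}, φ (g b)) = (Nat.card (g ⁻¹' {k}) : ℂ) * φ k := by
    intro k
    have h1 : (∑' b : g ⁻¹' {k}, φ (g b)) = ∑' _ : g ⁻¹' {k}, φ k :=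
      tsum_congr fun b => by rw [b.2]
    rw [h1, tsum_const, nsmul_eq_mul]
  simpa only [he] using H

/-- Item 1 of Proposition 4.3 in abstract form: if the character series equals a
Laurent polynomial on `0 < |λ| < 1`, the counting function is eventually the
affine map `−A₀ − n₀A₁`. -/
theorem stmt_14 (α₁ α₂ β : ℤ) (hα₁ : 0 < α₁) (hα₂ : 0 < α₂) (hβ : 0 < β)
    (Jq JF A₀ A₁ : ℤ) (S : Finset ℤ) (E : ℤ → ℂ)
    (h : ∀ lam : ℂ, 0 < ‖lam‖ → ‖lam‖ < 1 →
      (∑' m : ℕ × ℕ, lam ^ ((m.1 + 1 : ℤ) * α₁ + (m.2 + 1 : ℤ) * α₂ + Jq)) +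
        (A₀ : ℂ) * (∑' l : ℕ, lam ^ (JF + (l : ℤ) * β)) +
        (A₁ : ℂ) * (∑' l : ℕ × ℕ, lam ^ (JF + ((l.1 : ℤ) + l.2 + 1) * β)) =
      ∑ ρ ∈ S, E ρ * lam ^ ρ) :
    ∃ M : ℕ, ∀ n₀ : ℕ, M ≤ n₀ →
      (Nat.card {m : ℤ × ℤ // 1 ≤ m.1 ∧ 1 ≤ m.2 ∧
          m.1 * α₁ + m.2 * α₂ = JF - Jq + (n₀ : ℤ) * β} : ℤ) =
        -A₀ - (n₀ : ℤ) * A₁ := by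
  classical
  -- the shift
  set Jn : ℕ := Jq.natAbs + α₁.natAbs + α₂.natAbs + JF.natAbs + (S.sup fun ρ => ρ.natAbs) + 1
    with hJn
  set J : ℤ := (Jn : ℤ) with hJdef
  have habs1 : (Jq.natAbs : ℤ) + α₁.natAbs + α₂.natAbs + JF.natAbs + (S.sup fun ρ => ρ.natAbs) + 1
      = J := by rw [hJdef, hJn]; push_cast; ring
  have hJ1 : 0 ≤ Jq + α₁ + α₂ + J := by omega
  have hJ2 : 0 ≤ JF + J := by omega
  have hJ3 : ∀ ρ ∈ S, 0 ≤ ρ + J := by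
    intro ρ hρ
    have : ρ.natAbs ≤ S.sup fun ρ => ρ.natAbs := Finset.le_sup (f := fun ρ => ρ.natAbs) hρ
    omega
  -- exponent maps after shifting by J
  set g₁ : ℕ × ℕ → ℕ := fun m => ((m.1 + 1 : ℤ) * α₁ + (m.2 + 1 : ℤ) * α₂ + Jq + J).toNat
    with hg₁
  set g₂ : ℕ → ℕ := fun l => (JF + (l : ℤ) * β + J).toNat with hg₂
  set g₃ : ℕ × ℕ → ℕ := fun l => (JF + ((l.1 : ℤ) + l.2 + 1) * β + J).toNat with hg₃
  have he₁pos : ∀ m : ℕ × ℕ, 0 ≤ (m.1 + 1 : ℤ) * α₁ + (m.2 + 1 : ℤ) * α₂ + Jq + J := by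
    intro m
    have h1 : (1 : ℤ) * α₁ ≤ (m.1 + 1 : ℤ) * α₁ :=
      mul_le_mul_of_nonneg_right (by push_cast; omega) hα₁.le
    have h2 : (1 : ℤ) * α₂ ≤ (m.2 + 1 : ℤ) * α₂ :=
      mul_le_mul_of_nonneg_right (by push_cast; omega) hα₂.le
    linarith
  have he₂pos : ∀ l : ℕ, 0 ≤ JF + (l : ℤ) * β + J := by
    intro l
    have : (0 : ℤ) ≤ (l : ℤ) * β := mul_nonneg (by positivity) hβ.le
    linarith
  have he₃pos : ∀ l : ℕ × ℕ, 0 ≤ JF + ((l.1 : ℤ) + l.2 + 1) * β + J := by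
    intro l
    have : (0 : ℤ) ≤ ((l.1 : ℤ) + l.2 + 1) * β := mul_nonneg (by positivity) hβ.le
    linarith
  -- the coefficients
  set c₁ : ℕ → ℂ := fun k => (Nat.card (g₁ ⁻¹' {k}) : ℂ) with hc₁def
  set c₂ : ℕ → ℂ := fun k => (Nat.card (g₂ ⁻¹' {k}) : ℂ) with hc₂def
  set c₃ : ℕ → ℂ := fun k => (Nat.card (g₃ ⁻¹' {k}) : ℂ) with hc₃def
  set c₄ : ℕ → ℂ := fun k => ∑ ρ ∈ S.filter (fun ρ => ρ + J = (k : ℤ)), E ρ with hc₄def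
  have key : ∀ k : ℕ, c₁ k + (A₀ : ℂ) * c₂ k + (A₁ : ℂ) * c₃ k - c₄ k = 0 := by
    apply coeff_eq_zero_aux
    intro lam h1 h2
    have hlam0 : lam ≠ 0 := by simpa [norm_pos_iff] using h1
    -- zpow / pow conversion helpers
    have hpow : ∀ (n : ℕ) (x : ℤ), 0 ≤ x → lam ^ ((n : ℤ) * x) = (lam ^ x.toNat) ^ n := by
      intro n x hx
      rw [show (n : ℤ) * x = ((x.toNat * n : ℕ) : ℤ) by
          push_cast [Int.toNat_of_nonneg hx]; ring,
        zpow_natCast, pow_mul]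
    have hshift : ∀ x : ℤ, 0 ≤ x + J → lam ^ x * lam ^ Jn = lam ^ (x + J).toNat := by
      intro x hx
      rw [← zpow_natCast lam (x + J).toNat, Int.toNat_of_nonneg hx, zpow_add₀ hlam0,
        ← zpow_natCast lam Jn, ← hJdef]
    have hlt : ∀ x : ℤ, 0 < x → ‖lam ^ x.toNat‖ < 1 := by
      intro x hx
      rw [norm_pow]
      calc ‖lam‖ ^ x.toNat ≤ ‖lam‖ ^ 1 :=
            pow_le_pow_of_le_one (norm_nonneg _) h2.le (by omega)
        _ < 1 := by simpa using h2
    have hgeo : ∀ x : ℤ, 0 < x → Summable (fun n : ℕ => ‖(lam ^ x.toNat) ^ (n + 1)‖) := by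
      intro x hx
      have : Summable (fun n : ℕ => ‖lam ^ x.toNat‖ ^ (n + 1)) :=
        ((summable_geometric_of_lt_one (norm_nonneg _) (hlt x hx)).mul_left
          ‖lam ^ x.toNat‖).congr fun n => (pow_succ' _ n).symm
      exact this.congr fun n => (norm_pow _ _).symm
    -- summability of the three series
    have hsum₁ : Summable (fun m : ℕ × ℕ =>
        lam ^ ((m.1 + 1 : ℤ) * α₁ + (m.2 + 1 : ℤ) * α₂ + Jq)) := by
      have hP := ((Summable.mul_norm (hgeo α₁ hα₁) (hgeo α₂ hα₂)).of_norm).mul_left (lam ^ Jq)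
      apply hP.congr
      intro m
      rw [zpow_add₀ hlam0, zpow_add₀ hlam0,
        show ((m.1 : ℤ) + 1) * α₁ = ((m.1 + 1 : ℕ) : ℤ) * α₁ by push_cast; ring,
        show ((m.2 : ℤ) + 1) * α₂ = ((m.2 + 1 : ℕ) : ℤ) * α₂ by push_cast; ring,
        hpow (m.1 + 1) α₁ hα₁.le, hpow (m.2 + 1) α₂ hα₂.le]
      ring
    have hsum₂ : Summable (fun l : ℕ => lam ^ (JF + (l : ℤ) * β)) := by
      have hP := (summable_geometric_of_norm_lt_one (hlt β hβ)).mul_left (lam ^ JF)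
      apply hP.congr
      intro l
      rw [zpow_add₀ hlam0, hpow l β hβ.le]
    have hsum₃ : Summable (fun l : ℕ × ℕ => lam ^ (JF + ((l.1 : ℤ) + l.2 + 1) * β)) := by
      have hw : Summable (fun n : ℕ => ‖(lam ^ β.toNat) ^ n‖) := by
        have := summable_geometric_of_lt_one (norm_nonneg (lam ^ β.toNat)) (hlt β hβ)
        exact this.congr fun n => (norm_pow _ _).symm
      have hP := ((Summable.mul_norm hw hw).of_norm).mul_left (lam ^ JF * lam ^ β.toNat)
      apply hP.congr
      intro l
      rw [zpow_add₀ hlam0,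
        show ((l.1 : ℤ) + l.2 + 1) * β = ((l.1 + l.2 + 1 : ℕ) : ℤ) * β by push_cast; ring,
        hpow (l.1 + l.2 + 1) β hβ.le, pow_add, pow_add, pow_one]
      ring
    -- shifted HasSum statements, regrouped by fibers
    have H₁ : HasSum (fun k => c₁ k * lam ^ k)
        ((∑' m : ℕ × ℕ, lam ^ ((m.1 + 1 : ℤ) * α₁ + (m.2 + 1 : ℤ) * α₂ + Jq)) * lam ^ Jn) := by
      refine hasSum_card_fiber g₁ (fun k => lam ^ k) ?_
      refine (hsum₁.hasSum.mul_right (lam ^ Jn)).congr_fun fun m => ?_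
      exact (hshift _ (he₁pos m)).symm
    have H₂ : HasSum (fun k => c₂ k * lam ^ k)
        ((∑' l : ℕ, lam ^ (JF + (l : ℤ) * β)) * lam ^ Jn) := by
      refine hasSum_card_fiber g₂ (fun k => lam ^ k) ?_
      refine (hsum₂.hasSum.mul_right (lam ^ Jn)).congr_fun fun l => ?_
      exact (hshift _ (he₂pos l)).symm
    have H₃ : HasSum (fun k => c₃ k * lam ^ k)
        ((∑' l : ℕ × ℕ, lam ^ (JF + ((l.1 : ℤ) + l.2 + 1) * β)) * lam ^ Jn) := by
      refine hasSum_card_fiber g₃ (fun k => lam ^ k) ?_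
      refine (hsum₃.hasSum.mul_right (lam ^ Jn)).congr_fun fun l => ?_
      exact (hshift _ (he₃pos l)).symm
    -- the polynomial side
    have H₄ : HasSum (fun k => c₄ k * lam ^ k) ((∑ ρ ∈ S, E ρ * lam ^ ρ) * lam ^ Jn) := by
      have hvanish : ∀ k ∉ S.image (fun ρ => (ρ + J).toNat), c₄ k * lam ^ k = 0 := by
        intro k hk
        have hemp : S.filter (fun ρ => ρ + J = (k : ℤ)) = ∅ := by
          rw [Finset.filter_eq_empty_iff]
          intro ρ hρ hcon
          exact hk (Finset.mem_image.mpr ⟨ρ, hρ, by rw [hcon]; exact Int.toNat_natCast k⟩)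
        simp [hc₄def, hemp]
      have hbase : HasSum (fun k => c₄ k * lam ^ k)
          (∑ k ∈ S.image (fun ρ => (ρ + J).toNat), c₄ k * lam ^ k) :=
        hasSum_sum_of_ne_finset_zero hvanish
      have hval : ∑ k ∈ S.image (fun ρ => (ρ + J).toNat), c₄ k * lam ^ k
          = (∑ ρ ∈ S, E ρ * lam ^ ρ) * lam ^ Jn := by
        rw [Finset.sum_mul,
          ← Finset.sum_fiberwise_of_maps_to (g := fun ρ => (ρ + J).toNat)
            (fun ρ hρ => Finset.mem_image_of_mem (fun ρ => (ρ + J).toNat) hρ) (fun ρ => E ρ * lam ^ ρ * lam ^ Jn)]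
        refine Finset.sum_congr rfl fun k hk => ?_
        have hfe : S.filter (fun ρ => (ρ + J).toNat = k)
            = S.filter (fun ρ => ρ + J = (k : ℤ)) := by
          refine Finset.filter_congr fun ρ hρ => ?_
          have := hJ3 ρ hρ
          constructor
          · intro hc; omega
          · intro hc; omega
        rw [hfe, hc₄def, Finset.sum_mul]
        refine Finset.sum_congr rfl fun ρ hρ => ?_
        have hm : ρ + J = (k : ℤ) := by
          simpa using (Finset.mem_filter.mp hρ).2
        rw [mul_assoc, hshift ρ (hJ3 ρ (Finset.mem_filter.mp hρ).1)]
        have hx : (ρ + J).toNat = k := by omega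
        rw [hx]
      rw [← hval]
      exact hbase
    -- combine
    have Hcomb := ((H₁.add (H₂.mul_left (A₀ : ℂ))).add (H₃.mul_left (A₁ : ℂ))).sub H₄
    have hzero : (∑' m : ℕ × ℕ, lam ^ ((m.1 + 1 : ℤ) * α₁ + (m.2 + 1 : ℤ) * α₂ + Jq)) * lam ^ Jn
        + (A₀ : ℂ) * ((∑' l : ℕ, lam ^ (JF + (l : ℤ) * β)) * lam ^ Jn)
        + (A₁ : ℂ) * ((∑' l : ℕ × ℕ, lam ^ (JF + ((l.1 : ℤ) + l.2 + 1) * β)) * lam ^ Jn)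
        - (∑ ρ ∈ S, E ρ * lam ^ ρ) * lam ^ Jn = 0 := by
      linear_combination lam ^ Jn * (h lam h1 h2)
    rw [hzero] at Hcomb
    refine Hcomb.congr_fun fun k => ?_
    ring
  -- now extract the counting identity
  refine ⟨(S.sup fun ρ => ρ.natAbs) + JF.natAbs + 1, fun n₀ hn₀ => ?_⟩
  set kZ : ℤ := JF + (n₀ : ℤ) * β + J with hkZ
  have hn₀β : (n₀ : ℤ) ≤ (n₀ : ℤ) * β := le_mul_of_one_le_right (by positivity) hβ
  have hkZ0 : 0 ≤ kZ := by omega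
  set K : ℕ := kZ.toNat with hK
  have hKZ : (K : ℤ) = kZ := Int.toNat_of_nonneg hkZ0
  -- c₄ K = 0
  have hc₄K : c₄ K = 0 := by
    rw [hc₄def]
    refine Finset.sum_eq_zero fun ρ hρ => ?_
    exfalso
    rw [Finset.mem_filter] at hρ
    have h1 : ρ.natAbs ≤ S.sup fun ρ => ρ.natAbs :=
      Finset.le_sup (f := fun ρ => ρ.natAbs) hρ.1
    have h2 := hρ.2
    omega
  -- c₂ K = 1
  have hc₂K : c₂ K = 1 := by
    have hfib : g₂ ⁻¹' {K} = {n₀} := by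
      ext l
      simp only [Set.mem_preimage, Set.mem_singleton_iff, hg₂]
      constructor
      · intro hl
        have hEq : JF + (l : ℤ) * β + J = kZ := by
          have h1 := he₂pos l
          have h2 : (K : ℤ) = JF + (l : ℤ) * β + J := by
            rw [← hl, Int.toNat_of_nonneg h1]
          omega
        have hlβ : (l : ℤ) * β = (n₀ : ℤ) * β := by
          rw [hkZ] at hEq; omega
        exact_mod_cast mul_right_cancel₀ hβ.ne' hlβ
      · rintro rfl
        rw [← hkZ, ← hK]
    show ((Nat.card (g₂ ⁻¹' {K}) : ℂ)) = 1
    rw [hfib, Nat.card_coe_set_eq, Set.ncard_singleton]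
    norm_num
  -- c₃ K = n₀
  have hc₃K : c₃ K = (n₀ : ℂ) := by
    have hge1 : 1 ≤ n₀ := by omega
    have hfib : g₃ ⁻¹' {K} = ↑(Finset.HasAntidiagonal.antidiagonal (n₀ - 1)) := by
      ext l
      simp only [Set.mem_preimage, Set.mem_singleton_iff, hg₃, Finset.coe_sort_coe,
        Finset.mem_coe, Finset.HasAntidiagonal.mem_antidiagonal]
      constructor
      · intro hl
        have h2 : (K : ℤ) = JF + ((l.1 : ℤ) + l.2 + 1) * β + J := by
          rw [← hl]; exact Int.toNat_of_nonneg (he₃pos l)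
        have hEq : ((l.1 : ℤ) + l.2 + 1) * β = (n₀ : ℤ) * β := by
          have h3 := hKZ
          rw [hkZ] at h3
          linarith
        have hcast : (l.1 : ℤ) + l.2 + 1 = (n₀ : ℤ) := mul_right_cancel₀ hβ.ne' hEq
        omega
      · intro hl
        have hl' : ((l.1 : ℤ) + l.2 + 1) = (n₀ : ℤ) := by push_cast; omega
        show (JF + ((l.1 : ℤ) + l.2 + 1) * β + J).toNat = K
        rw [hl', hK, hkZ]
    show ((Nat.card (g₃ ⁻¹' {K}) : ℂ)) = (n₀ : ℂ)
    rw [hfib, Nat.card_coe_set_eq, Set.ncard_coe_finset, Finset.Nat.card_antidiagonal]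
    have : n₀ - 1 + 1 = n₀ := by omega
    rw [this]
  -- c₁ K equals the statement's count
  have hc₁K : c₁ K = (Nat.card {m : ℤ × ℤ // 1 ≤ m.1 ∧ 1 ≤ m.2 ∧
      m.1 * α₁ + m.2 * α₂ = JF - Jq + (n₀ : ℤ) * β} : ℂ) := by
    show ((Nat.card (g₁ ⁻¹' {K}) : ℂ)) = _
    congr 1
    apply Nat.card_congr
    have hmem : ∀ m : ℕ × ℕ, m ∈ g₁ ⁻¹' {K} ↔
        ((m.1 : ℤ) + 1) * α₁ + ((m.2 : ℤ) + 1) * α₂ = JF - Jq + (n₀ : ℤ) * β := by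
      intro m
      simp only [Set.mem_preimage, Set.mem_singleton_iff, hg₁]
      constructor
      · intro hl
        have h2 : (K : ℤ) = ((m.1 : ℤ) + 1) * α₁ + ((m.2 : ℤ) + 1) * α₂ + Jq + J := by
          rw [← hl]; exact Int.toNat_of_nonneg (he₁pos m)
        have h3 := hKZ
        rw [hkZ] at h3
        linarith
      · intro hl
        show (((m.1 : ℤ) + 1) * α₁ + ((m.2 : ℤ) + 1) * α₂ + Jq + J).toNat = K
        have h4 : ((m.1 : ℤ) + 1) * α₁ + ((m.2 : ℤ) + 1) * α₂ + Jq + J = kZ := by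
          rw [hkZ]; linarith
        rw [h4, hK]
    refine ⟨fun m => ⟨((m.1.1 : ℤ) + 1, (m.1.2 : ℤ) + 1), by omega, by omega,
        (hmem m.1).mp m.2⟩,
      fun m => ⟨((m.1.1 - 1).toNat, (m.1.2 - 1).toNat), (hmem _).mpr ?_⟩, ?_, ?_⟩
    · have e1 : ((((m : {m : ℤ × ℤ // 1 ≤ m.1 ∧ 1 ≤ m.2 ∧
          m.1 * α₁ + m.2 * α₂ = JF - Jq + (n₀ : ℤ) * β}).1.1 - 1).toNat : ℤ) + 1)
          = m.1.1 := by
        have := m.2.1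
        omega
      have e2 : ((((m : {m : ℤ × ℤ // 1 ≤ m.1 ∧ 1 ≤ m.2 ∧
          m.1 * α₁ + m.2 * α₂ = JF - Jq + (n₀ : ℤ) * β}).1.2 - 1).toNat : ℤ) + 1)
          = m.1.2 := by
        have := m.2.2.1
        omega
      rw [e1, e2]
      exact m.2.2.2
    · intro m
      ext
      · show ((((m.1.1 : ℤ) + 1) - 1).toNat) = m.1.1
        omega
      · show ((((m.1.2 : ℤ) + 1) - 1).toNat) = m.1.2
        omega
    · intro m
      ext
      · show (((m.1.1 - 1).toNat : ℤ) + 1) = m.1.1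
        have := m.2.1
        omega
      · show (((m.1.2 - 1).toNat : ℤ) + 1) = m.1.2
        have := m.2.2.1
        omega
  -- conclude
  have hK' := key K
  rw [hc₁K, hc₂K, hc₃K, hc₄K] at hK'
  have hfin : ((Nat.card {m : ℤ × ℤ // 1 ≤ m.1 ∧ 1 ≤ m.2 ∧
      m.1 * α₁ + m.2 * α₂ = JF - Jq + (n₀ : ℤ) * β} : ℤ) : ℂ)
      = ((-A₀ - (n₀ : ℤ) * A₁ : ℤ) : ℂ) := by
    push_cast
    push_cast at hK'
    linear_combination hK'
  exact_mod_cast hfin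
end
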